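/- Let T be a triangulated category, S ⊆ T a triangulated subcategory, and let A, C ⊆ S and X, Z ⊆ T be full subcategories with add(A) = A and add(C) = C. Assume that for any object s ∈ S, any morphism s → x with x ∈ X factors through an object of A, and any morphism s → z with z ∈ Z factors through an object of C. Then any morphism f : s → y with s ∈ S and y ∈ X ⋆ Z factors as s → b → y with b ∈ A ⋆ C. -/

import Mathlib

open CategoryTheory CategoryTheory.Limits CategoryTheory.Pretriangulated

universe w v u

namespace Paper

variable (C : Type u) [Category.{v} C] [HasZeroObject C] [Preadditive C] [HasShift C ℤ]
  [∀ n : ℤ, (CategoryTheory.shiftFunctor C n).Additive] [Pretriangulated C]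

/-- `A ⋆ B`: the full subcategory of objects `y` admitting a distinguished triangle
`x ⟶ y ⟶ z ⟶ x⟦1⟧` with `x ∈ A` and `z ∈ B`. -/
def star (A B : Set C) : Set C :=
  {y | ∃ (x z : C) (f : x ⟶ y) (g : y ⟶ z) (h : z ⟶ x⟦(1 : ℤ)⟧),
    x ∈ A ∧ z ∈ B ∧ Triangle.mk f g h ∈ distTriang C}

/-- `Add A`: all objects isomorphic to a (set-indexed) coproduct of objects of `A`. -/
def AddCl (A : Set C) : Set C :=
  {y | ∃ (ι : Type w) (f : ι → C) (c : Cofan f),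
    (∀ i, f i ∈ A) ∧ Nonempty (IsColimit c) ∧ Nonempty (y ≅ c.pt)}

/-- `add A`: all objects isomorphic to a finite coproduct of objects of `A`. -/
def addCl (A : Set C) : Set C :=
  {y | ∃ (ι : Type) (_ : Finite ι) (f : ι → C) (c : Cofan f),
    (∀ i, f i ∈ A) ∧ Nonempty (IsColimit c) ∧ Nonempty (y ≅ c.pt)}

/-- `Coprod_n(A)` for `n ≥ 1` (the value at `0` is a junk value `∅`):
`Coprod_1(A) = Add(A)` and `Coprod_{n+1}(A) = Add(A) ⋆ Coprod_n(A)`. -/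
def CoprodN (A : Set C) : ℕ → Set C
  | 0 => ∅
  | 1 => AddCl.{w} C A
  | (n+2) => star C (AddCl.{w} C A) (CoprodN A (n+1))

/-- `COprod_n(A)` for `n ≥ 1` (the value at `0` is a junk value `∅`):
`COprod_1(A) = add(A)` and `COprod_{n+1}(A) = add(A) ⋆ COprod_n(A)`. -/
def COprodN (A : Set C) : ℕ → Set C
  | 0 => ∅
  | 1 => addCl C A
  | (n+2) => star C (addCl C A) (COprodN A (n+1))

/-- `Smr A`: direct summands of objects of `A`. -/
def Smr (A : Set C) : Set C :=
  {x | ∃ b ∈ A, ∃ (i : x ⟶ b) (r : b ⟶ x), i ≫ r = 𝟙 x}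

/-- The shift `A⟦k⟧` of a collection of objects. -/
def shiftSet (A : Set C) (k : ℤ) : Set C := {y | ∃ a ∈ A, Nonempty (y ≅ a⟦k⟧)}

/-- `A[m,n] = ⋃_{i=-n}^{-m} A⟦i⟧`. -/
def shiftRange (A : Set C) (m n : ℤ) : Set C :=
  {y | ∃ i : ℤ, -n ≤ i ∧ i ≤ -m ∧ y ∈ shiftSet C A i}

/-- `A[m,∞) = ⋃_{i ≤ -m} A⟦i⟧`. -/
def shiftRangeGE (A : Set C) (m : ℤ) : Set C :=
  {y | ∃ i : ℤ, i ≤ -m ∧ y ∈ shiftSet C A i}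

/-- `A(-∞,∞) = ⋃_{i ∈ ℤ} A⟦i⟧`. -/
def shiftAll (A : Set C) : Set C := {y | ∃ i : ℤ, y ∈ shiftSet C A i}

/-- `s` is a compact object: the canonical map `⊕ᵢ Hom(s, f i) → Hom(s, ∐ f)`
is bijective for every set-indexed family `f`. -/
def IsCompactObj [HasCoproducts.{v} C] (s : C) : Prop :=
  ∀ (ι : Type v) [DecidableEq ι] (f : ι → C),
    Function.Bijective (DFinsupp.sumAddHom
      (fun i => AddMonoidHom.mk' (fun g : s ⟶ f i => g ≫ Sigma.ι f i)
        (fun g g' => Preadditive.add_comp _ _ _ g g' _)) :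
      (Π₀ i : ι, (s ⟶ f i)) → (s ⟶ ∐ f))

/-- A (full) triangulated subcategory, described by its class of objects: it contains `0`,
is closed under isomorphisms, shifts, and extensions (two-out-of-three in triangles). -/
structure IsTriangulatedSub (S : Set C) : Prop where
  zero : ∃ z : C, IsZero z ∧ z ∈ S
  iso : ∀ {x y : C}, (x ≅ y) → x ∈ S → y ∈ S
  shift : ∀ x ∈ S, ∀ i : ℤ, x⟦i⟧ ∈ S
  ext : ∀ T ∈ distTriang C, T.obj₁ ∈ S → T.obj₃ ∈ S → T.obj₂ ∈ S

lemma biprod_mem {A : Set C} (hA : addCl C A = A) {a a' : C} (ha' : a' ∈ A) (ha : a ∈ A) :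
    (a' ⊞ a) ∈ A := by
  rw [← hA]
  refine ⟨Bool, inferInstance, fun j => bif j then a else a',
    Cofan.mk (a' ⊞ a) (fun j => match j with
      | false => biprod.inl
      | true => biprod.inr), fun j => by cases j <;> assumption,
    ⟨mkCofanColimit _ (fun t => biprod.desc (t.inj false) (t.inj true))
      (fun t j => by cases j <;> simp)
      (fun t m hm => by
        apply biprod.hom_ext' <;> simp [← hm false, ← hm true])⟩, ⟨Iso.refl _⟩⟩


lemma summand_triangle_distinguished {a b c : C} (a' : C) (α : a ⟶ b) (β : b ⟶ c)
    (h : c ⟶ a⟦(1 : ℤ)⟧) (hT : Triangle.mk α β h ∈ distTriang C) :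
    Triangle.mk (biprod.map (𝟙 a') α) ((biprod.snd : a' ⊞ b ⟶ b) ≫ β)
      (h ≫ (biprod.inr : a ⟶ a' ⊞ a)⟦(1 : ℤ)⟧') ∈ distTriang C := by
  let TT : Bool → Triangle C := fun j => match j with | true => ⟨a, b, c, α, β, h⟩ | false => ⟨a', a', (contractibleTriangle a').obj₃, 𝟙 a', 0, 0⟩
  have hTT : ∀ j, TT j ∈ distTriang C := by
    intro j
    cases j
    · exact contractible_distinguished a'
    · exact hT
  have hP := productTriangle_distinguished TT hTT
  refine isomorphic_distinguished _ hP _ ?_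
  let e₁ : a' ⊞ a ≅ ∏ᶜ (fun j => (TT j).obj₁) :=
    { hom := Pi.lift (fun j => match j with
        | false => (biprod.fst : a' ⊞ a ⟶ a')
        | true => (biprod.snd : a' ⊞ a ⟶ a))
      inv := biprod.lift (Pi.π _ false) (Pi.π _ true)
      hom_inv_id := by apply biprod.hom_ext <;> simp
      inv_hom_id := by
        apply Pi.hom_ext; intro j
        cases j
        · simp only [Category.id_comp, Category.assoc, limit.lift_π, Fan.mk_π_app]
          exact biprod.lift_fst _ _
        · simp only [Category.id_comp, Category.assoc, limit.lift_π, Fan.mk_π_app]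
          exact biprod.lift_snd _ _ }
  let e₂ : a' ⊞ b ≅ ∏ᶜ (fun j => (TT j).obj₂) :=
    { hom := Pi.lift (fun j => match j with
        | false => (biprod.fst : a' ⊞ b ⟶ a')
        | true => (biprod.snd : a' ⊞ b ⟶ b))
      inv := biprod.lift (Pi.π _ false) (Pi.π _ true)
      hom_inv_id := by apply biprod.hom_ext <;> simp
      inv_hom_id := by
        apply Pi.hom_ext; intro j
        cases j
        · simp only [Category.id_comp, Category.assoc, limit.lift_π, Fan.mk_π_app]
          exact biprod.lift_fst _ _
        · simp only [Category.id_comp, Category.assoc, limit.lift_π, Fan.mk_π_app]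
          exact biprod.lift_snd _ _ }
  let e₃ : c ≅ ∏ᶜ (fun j => (TT j).obj₃) :=
    { hom := Pi.lift (fun j => match j with
        | false => 0
        | true => 𝟙 c)
      inv := Pi.π _ true
      hom_inv_id := by simp
      inv_hom_id := by
        apply Pi.hom_ext; intro j
        cases j
        · apply (isZero_zero C).eq_of_tgt
        · simp }
  refine Triangle.isoMk _ _ e₁ e₂ e₃ ?_ ?_ ?_
  · change biprod.map (𝟙 a') α ≫ e₂.hom = e₁.hom ≫ Limits.Pi.map (fun j => (TT j).mor₁)
    apply Pi.hom_ext; intro j; cases j <;> simp [e₁, e₂, TT]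
  · change ((biprod.snd : a' ⊞ b ⟶ b) ≫ β) ≫ e₃.hom = e₂.hom ≫ Limits.Pi.map (fun j => (TT j).mor₂)
    apply Pi.hom_ext; intro j; cases j <;> simp [e₂, e₃, TT]
  · change (h ≫ (biprod.inr : a ⟶ a' ⊞ a)⟦(1 : ℤ)⟧') ≫ e₁.hom⟦(1 : ℤ)⟧' = e₃.hom ≫ (Limits.Pi.map (fun j => (TT j).mor₃) ≫ inv (piComparison _ _))
    rw [← cancel_mono (piComparison (shiftFunctor C (1 : ℤ)) (fun j => (TT j).obj₁))]
    simp only [Category.assoc, IsIso.inv_hom_id, Category.comp_id]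
    apply Pi.hom_ext; intro j
    cases j <;>
      simp [e₁, e₃, piComparison_comp_π, ← Functor.map_comp, TT]


/-- Lemma 1.9. Let `S ⊆ C` be a triangulated subcategory, and
`A, Cc ⊆ S`, `X, Z ⊆ C` full subcategories with `add(A) = A` and `add(Cc) = Cc`.
If every morphism from an object of `S` to an object of `X` (resp. `Z`) factors
through an object of `A` (resp. `Cc`), then every morphism `f : s ⟶ y` with
`s ∈ S` and `y ∈ X ⋆ Z` factors as `s ⟶ b ⟶ y` with `b ∈ A ⋆ Cc`. -/
theorem stmt2 (S A Cc X Z : Set C) (hS : IsTriangulatedSub C S)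
    (hAS : A ⊆ S) (hCS : Cc ⊆ S)
    (hA : addCl C A = A) (hC : addCl C Cc = Cc)
    (hfacX : ∀ (s x : C), s ∈ S → x ∈ X → ∀ g : s ⟶ x,
      ∃ a ∈ A, ∃ (u : s ⟶ a) (v : a ⟶ x), u ≫ v = g)
    (hfacZ : ∀ (s z : C), s ∈ S → z ∈ Z → ∀ g : s ⟶ z,
      ∃ c ∈ Cc, ∃ (u : s ⟶ c) (v : c ⟶ z), u ≫ v = g) :
    ∀ (s y : C), s ∈ S → y ∈ star C X Z → ∀ f : s ⟶ y,
      ∃ b ∈ star C A Cc, ∃ (u : s ⟶ b) (v : b ⟶ y), u ≫ v = f := by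
  rintro s y hs ⟨x, z, i, g, δ, hx, hz, hT⟩ f
  -- factor f ≫ g through Cc
  obtain ⟨c, hc, u, v, huv⟩ := hfacZ s z hs hz (f ≫ g)
  obtain ⟨d, m, n, hT1⟩ := distinguished_cocone_triangle₁ u
  -- d ∈ S
  have hd1 : (d⟦(1 : ℤ)⟧) ∈ S :=
    hS.ext _ (rot_of_distTriang _ (rot_of_distTriang _ hT1)) (hCS hc) (hS.shift s hs 1)
  have hd : d ∈ S :=
    hS.iso ((shiftFunctorCompIsoId C (1 : ℤ) (-1 : ℤ) (by ring)).app d) (hS.shift _ hd1 (-1))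
  obtain ⟨w, hw1, hw2⟩ := complete_distinguished_triangle_morphism₁ _ (Triangle.mk i g δ)
    hT1 hT f v huv
  obtain ⟨a, haA, e₀, j, hej⟩ := hfacX d x hd hx w
  obtain ⟨b, α, β, hTb⟩ := distinguished_cocone_triangle₂ (n ≫ e₀⟦(1 : ℤ)⟧')
  have hun : u ≫ n = 0 := comp_distTriang_mor_zero₂₃ _ hT1
  obtain ⟨t, ht⟩ := Triangle.coyoneda_exact₃ _ hTb u (by
    change u ≫ (n ≫ e₀⟦(1 : ℤ)⟧') = 0
    rw [← Category.assoc, hun, zero_comp])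
  obtain ⟨γ, hγ1, hγ2⟩ := complete_distinguished_triangle_morphism₂ _ (Triangle.mk i g δ)
    hTb hT j v (by
      change (n ≫ e₀⟦(1 : ℤ)⟧') ≫ j⟦(1 : ℤ)⟧' = v ≫ δ
      change n ≫ w⟦(1 : ℤ)⟧' = v ≫ δ at hw2
      rw [Category.assoc, ← Functor.map_comp, hej]
      exact hw2)
  change s ⟶ b at t
  change b ⟶ y at γ
  change d ⟶ x at w
  change β ≫ v = γ ≫ g at hγ2
  change u = t ≫ β at ht
  obtain ⟨h', hh'⟩ := Triangle.coyoneda_exact₂ _ hT (t ≫ γ - f) (by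
    change (t ≫ γ - f) ≫ g = 0
    rw [Preadditive.sub_comp, Category.assoc, ← hγ2, ← Category.assoc, ← ht, huv, sub_self])
  change s ⟶ x at h'
  change t ≫ γ - f = h' ≫ i at hh'
  obtain ⟨a', ha'A, u', v', hv'⟩ := hfacX s x hs hx h'
  refine ⟨a' ⊞ b, ⟨a' ⊞ a, c, biprod.map (𝟙 a') α, biprod.snd ≫ β,
    (n ≫ e₀⟦(1 : ℤ)⟧') ≫ (biprod.inr : a ⟶ a' ⊞ a)⟦(1 : ℤ)⟧',
    biprod_mem C hA ha'A haA, hc,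
    summand_triangle_distinguished C a' α β _ hTb⟩,
    biprod.lift (-u') t, biprod.desc (v' ≫ i) γ, ?_⟩
  rw [biprod.lift_desc, Preadditive.neg_comp]
  have : t ≫ γ = f + (u' ≫ v') ≫ i := by
    rw [hv', ← hh']
    abel
  rw [this]
  simp only [Category.assoc]
  abel

end Paper
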